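/- Let S = Δ_{l_0} × ⋯ × Δ_{l_k} be a polysimplex and V a real vector space with a convex cone V⁺. A family of elements w_{n_0,...,n_k} ∈ V⁺ (n_i = 0,...,l_i) arises as the set of vertex images W(s_{n_0,...,n_k}) of some affine map W : S → V⁺ if and only if for all index tuples (n_0,...,n_k), (n_0',...,n_k') and all i: w_{n_0,...,n_k} + w_{n_0',...,n_k'} = w_{n_0,...,n_{i-1},n_i',n_{i+1},...,n_k} + w_{n_0',...,n_{i-1}',n_i,n_{i+1}',...,n_k'}. -/

import Mathlib

abbrev PolyAmb (k : ℕ) (l : Fin (k + 1) → ℕ) := Π i : Fin (k + 1), Fin (l i + 1) → ℝ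

def Spoly (k : ℕ) (l : Fin (k + 1) → ℕ) : Set (PolyAmb k l) :=
  Set.univ.pi fun i => stdSimplex ℝ (Fin (l i + 1))

def vert (k : ℕ) (l : Fin (k + 1) → ℕ) (n : Π i : Fin (k + 1), Fin (l i + 1)) :
    PolyAmb k l := fun i => Pi.single (n i) 1

def IsAffineOn {E V : Type*} [AddCommGroup E] [Module ℝ E] [AddCommGroup V] [Module ℝ V]
    (C : Set E) (f : E → V) : Prop :=
  ∀ x ∈ C, ∀ y ∈ C, ∀ a b : ℝ, 0 ≤ a → 0 ≤ b → a + b = 1 →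
    f (a • x + b • y) = a • f x + b • f y

/-- a family `w_{n_0,…,n_k} ∈ V⁺` is the family of vertex images of
an affine map `W : S → V⁺` of the polysimplex into the cone iff it satisfies the
exchange relations
`w_n + w_{n'} = w_{n[i ← n'_i]} + w_{n'[i ← n_i]}` for all `n, n', i`. -/
theorem stmt_15 (k : ℕ) (l : Fin (k + 1) → ℕ)
    {V : Type*} [AddCommGroup V] [Module ℝ V]
    (Vplus : Set V) (hconv : Convex ℝ Vplus)
    (hcone : ∀ c : ℝ, 0 ≤ c → ∀ v ∈ Vplus, c • v ∈ Vplus)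
    (w : (Π i : Fin (k + 1), Fin (l i + 1)) → V) (hw : ∀ n, w n ∈ Vplus) :
    (∃ W : PolyAmb k l → V, IsAffineOn (Spoly k l) W ∧
        (∀ s ∈ Spoly k l, W s ∈ Vplus) ∧ ∀ n, W (vert k l n) = w n) ↔
      (∀ (n n' : Π i : Fin (k + 1), Fin (l i + 1)) (i : Fin (k + 1)),
        w n + w n' = w (Function.update n i (n' i)) + w (Function.update n' i (n i))) := by
  have hvmem : ∀ n, vert k l n ∈ Spoly k l := fun n i _ => single_mem_stdSimplex ℝ (n i)
  constructor
  · rintro ⟨W, hWaff, -, hWv⟩ n n' i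
    have heq : (1/2 : ℝ) • vert k l n + (1/2 : ℝ) • vert k l n'
        = (1/2 : ℝ) • vert k l (Function.update n i (n' i))
          + (1/2 : ℝ) • vert k l (Function.update n' i (n i)) := by
      funext j m
      rcases eq_or_ne j i with rfl | hj
      · simp [vert, add_comm]
      · simp [vert, Function.update_of_ne hj]
    have h1 := hWaff _ (hvmem n) _ (hvmem n') (1/2) (1/2) (by norm_num) (by norm_num)
      (by norm_num)
    have h2 := hWaff _ (hvmem (Function.update n i (n' i))) _
      (hvmem (Function.update n' i (n i))) (1/2) (1/2) (by norm_num) (by norm_num) (by norm_num)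
    rw [heq, h2] at h1
    have h3 := congrArg (fun v => (2 : ℝ) • v) h1
    simpa [hWv, smul_add, smul_smul] using h3.symm
  · intro hr
    set n0 : Π i : Fin (k + 1), Fin (l i + 1) := fun _ => 0 with hn0
    -- decomposition lemma
    have claim : ∀ (t : Finset (Fin (k + 1))) (n : Π i : Fin (k + 1), Fin (l i + 1)),
        w (fun j => if j ∈ t then n j else 0)
          = (∑ i ∈ t, (w (Function.update n0 i (n i)) - w n0)) + w n0 := by
      intro t
      induction t using Finset.induction with
      | empty => intro n; simp [hn0]
      | @insert a t ha ih =>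
        intro n
        have hfun : (fun j => if j ∈ insert a t then n j else 0)
            = Function.update (fun j => if j ∈ t then n j else 0) a (n a) := by
          funext j
          rcases eq_or_ne j a with rfl | hj
          · simp [ha]
          · simp [Function.update_of_ne hj, Finset.mem_insert, hj]
        have rel := hr (fun j => if j ∈ t then n j else 0) (Function.update n0 a (n a)) a
        have h0 : (if a ∈ t then n a else 0) = (0 : Fin (l a + 1)) := by simp [ha]
        rw [h0] at rel
        have h00 : Function.update (Function.update n0 a (n a)) a 0 = n0 := by
          funext j
          rcases eq_or_ne j a with rfl | hj
          · simp [hn0]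
          · simp [Function.update_of_ne hj]
        rw [h00, Function.update_self] at rel
        rw [hfun, Finset.sum_insert ha]
        rw [ih n] at rel
        rw [eq_sub_of_add_eq rel.symm]
        abel
    have hdec : ∀ n, w n = (∑ i, (w (Function.update n0 i (n i)) - w n0)) + w n0 := by
      intro n
      have := claim Finset.univ n
      simpa using this
    -- the linear part
    set L : PolyAmb k l →ₗ[ℝ] V :=
      { toFun := fun s => ∑ i, ∑ m, s i m • w (Function.update n0 i m)
        map_add' := by
          intro x y
          simp [add_smul, Finset.sum_add_distrib]
        map_smul' := by
          intro c x
          simp [mul_smul, Finset.smul_sum] } with hL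
    set c : V := w n0 - (∑ i : Fin (k + 1), w n0) with hc
    have hLvert : ∀ n, L (vert k l n) = ∑ i, w (Function.update n0 i (n i)) := by
      intro n
      rw [hL]
      simp only [LinearMap.coe_mk, AddHom.coe_mk]
      refine Finset.sum_congr rfl fun i _ => ?_
      rw [Finset.sum_eq_single (n i)]
      · simp [vert]
      · intro m _ hm; simp [vert, Pi.single_apply, hm]
      · simp
    have hvertval : ∀ n, L (vert k l n) + c = w n := by
      intro n
      rw [hLvert, hc, hdec n, Finset.sum_sub_distrib]
      abel
    refine ⟨fun s => L s + c, ?_, ?_, hvertval⟩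
    · intro x _ y _ a b ha hb hab
      have hcc : a • c + b • c = c := by rw [← add_smul, hab, one_smul]
      simp only [map_add, map_smul, smul_add]
      conv_lhs => rw [← hcc]
      abel
    · -- positivity
      intro s hs
      set Waff : PolyAmb k l →ᵃ[ℝ] V := L.toAffineMap + AffineMap.const ℝ (PolyAmb k l) c
        with hWaff
      have hWs : ∀ u, Waff u = L u + c := fun u => rfl
      have hrange : Set.univ.pi
          (fun i => Set.range fun (m : Fin (l i + 1)) (j : Fin (l i + 1)) =>
            if m = j then (1 : ℝ) else 0) = Set.range (vert k l) := by
        ext f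
        constructor
        · intro hf
          choose g hg using fun i => hf i (Set.mem_univ i)
          refine ⟨g, ?_⟩
          funext i j
          rw [← hg i]
          simp [vert, Pi.single_apply, eq_comm]
        · rintro ⟨n, rfl⟩ i -
          exact ⟨n i, by funext j; simp [vert, Pi.single_apply, eq_comm]⟩
      have hSp : Spoly k l = convexHull ℝ (Set.range (vert k l)) := by
        rw [← hrange, convexHull_pi]
        refine Set.pi_congr rfl fun i _ => ?_
        have h := (convexHull_basis_eq_stdSimplex (R := ℝ) (Fin (l i + 1))).symm
        convert h using 2
      rw [hSp] at hs
      have : Waff s ∈ Waff '' (convexHull ℝ (Set.range (vert k l))) := ⟨s, hs, rfl⟩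
      rw [AffineMap.image_convexHull] at this
      have hsub : convexHull ℝ (Waff '' Set.range (vert k l)) ⊆ Vplus := by
        apply convexHull_min _ hconv
        rintro - ⟨-, ⟨n, rfl⟩, rfl⟩
        rw [hWs, hvertval]
        exact hw n
      exact hsub this
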